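/- arXiv:1906.09129 — 2 statements merged into one kernel-verified Lean document; each statement's English description precedes it below -/
import Mathlib

section
/- Let H be a real Hilbert space, T : H → 2^H a maximal monotone operator with s ∈ S := T⁻¹(0), and let (z_n) be generated by (mPPA): z_{n+1} = λ_n u + γ_n z_n + δ_n J_{c_n}(z_n) + e_n, where u, z₀ ∈ H, (λ_n), (γ_n), (δ_n) ⊂ (0,1) with λ_n + γ_n + δ_n = 1, c_n > 0, e_n ∈ H. Assume a, c ∈ ℕ \ {0} and monotone functions ℓ, E : ℕ → ℕ satisfy: λ_n ≤ 1/(k+1) for all n ≥ ℓ(k); 1/a ≤ γ_m ≤ 1 − 1/a for all m; c_n ≥ 1/c for all n; ∑_{i=E(k)+1}^{E(k)+n} ‖e_i‖ ≤ 1/(k+1) for all k, n. Let N₁ ≥ ‖u‖, N₂ ≥ ∑_{i=0}^{E(0)} ‖e_i‖ + 1, N₃ ≥ max{‖u − s‖, ‖z₀ − s‖}, N₀ := N₂ + N₃, and let (w_n) be such that z_{n+1} = γ_n z_n + (1 − γ_n) w_n. Suppose χ : ℕ → ℕ is a monotone function such that ‖w_m − z_m‖ ≤ 1/(k+1) for all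 k and all m ≥ χ(k). Then for every k ∈ ℕ: (i) ‖z_{m+1} − z_m‖ ≤ 1/(k+1) for all m ≥ χ(k); (ii) ‖J_{c_m}(z_m) − z_m‖ ≤ 1/(k+1) for all m ≥ max{μ(k), χ(2a(k+1))}; (iii) ‖J_{1/c}(z_m) − z_m‖ ≤ 1/(k+1) for all m ≥ max{μ(2k+1), χ(4a(k+1))}; where μ(k) := max{ ℓ(4a(k+1)(N₀+N₃)), E(4a(k+1)) + 1 }. -/
open scoped Pointwise RealInnerProductSpace

/-- A set-valued operator `T : H → Set H` is monotone. -/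
def IsMonotoneOp {H : Type*} [NormedAddCommGroup H] [InnerProductSpace ℝ H]
    (T : H → Set H) : Prop :=
  ∀ x x' y y' : H, y ∈ T x → y' ∈ T x' → 0 ≤ ⟪x - x', y - y'⟫

/-- `T` is maximal monotone. -/
def IsMaximalMonotoneOp {H : Type*} [NormedAddCommGroup H] [InnerProductSpace ℝ H]
    (T : H → Set H) : Prop :=
  IsMonotoneOp T ∧ ∀ T' : H → Set H, IsMonotoneOp T' → (∀ x, T x ⊆ T' x) → T' = T

/-- `J` is the family of resolvents of `T`: `J c = (I + c T)⁻¹` for `c > 0`. -/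
def IsResolventFamilyOf {H : Type*} [NormedAddCommGroup H] [InnerProductSpace ℝ H]
    (J : ℝ → H → H) (T : H → Set H) : Prop :=
  ∀ c : ℝ, 0 < c → ∀ x : H, x - J c x ∈ c • T (J c x)

/-- `μ(k) := max{ℓ(4a(k+1)(N₀+N₃)), E(4a(k+1))+1}`. -/
def muFun (ℓ E : ℕ → ℕ) (a N₀ N₃ k : ℕ) : ℕ :=
  max (ℓ (4*a*(k+1)*(N₀+N₃))) (E (4*a*(k+1)) + 1)


section Helpers

variable {H : Type*} [NormedAddCommGroup H] [InnerProductSpace ℝ H]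
  {T : H → Set H} {J : ℝ → H → H} {s : H}

lemma resolvent_mem (hJ : IsResolventFamilyOf J T) {c : ℝ} (hc : 0 < c) (x : H) :
    c⁻¹ • (x - J c x) ∈ T (J c x) := by
  obtain ⟨y, hy, hcy⟩ := Set.mem_smul_set.mp (hJ c hc x)
  rw [← hcy, smul_smul, inv_mul_cancel₀ hc.ne', one_smul]
  exact hy

lemma resolvent_fixed (hmono : IsMonotoneOp T) (hJ : IsResolventFamilyOf J T)
    (hs : (0:H) ∈ T s) {c : ℝ} (hc : 0 < c) : J c s = s := by
  have h := hmono (J c s) s _ 0 (resolvent_mem hJ hc s) hs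
  rw [sub_zero, real_inner_smul_right] at h
  have h2 : ⟪J c s - s, s - J c s⟫ = -‖J c s - s‖^2 := by
    rw [← neg_sub (J c s) s, inner_neg_right, real_inner_self_eq_norm_sq]
  rw [h2] at h
  have h3 : ‖J c s - s‖^2 ≤ 0 := by nlinarith [inv_pos.mpr hc]
  have h4 : ‖J c s - s‖ = 0 := by nlinarith [sq_nonneg ‖J c s - s‖, norm_nonneg (J c s - s)]
  rw [← sub_eq_zero]
  exact norm_eq_zero.mp h4

lemma resolvent_nonexp (hmono : IsMonotoneOp T) (hJ : IsResolventFamilyOf J T)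
    (hs : (0:H) ∈ T s) {c : ℝ} (hc : 0 < c) (x : H) :
    ‖J c x - s‖ ≤ ‖x - s‖ := by
  have h := hmono (J c x) s _ 0 (resolvent_mem hJ hc x) hs
  rw [sub_zero, real_inner_smul_right] at h
  have h1 : 0 ≤ ⟪J c x - s, x - J c x⟫ := by
    nlinarith [inv_pos.mpr hc]
  have h2 : ‖J c x - s‖^2 ≤ ⟪J c x - s, x - s⟫ := by
    have hx : x - s = (x - J c x) + (J c x - s) := by abel
    rw [hx, inner_add_right, real_inner_self_eq_norm_sq]
    linarith
  have h3 := real_inner_le_norm (J c x - s) (x - s)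
  rcases eq_or_lt_of_le (norm_nonneg (J c x - s)) with hA | hA
  · rw [← hA]; exact norm_nonneg _
  · nlinarith [norm_nonneg (x - s)]

lemma resolvent_compare (hmono : IsMonotoneOp T) (hJ : IsResolventFamilyOf J T)
    (x : H) {lm mu : ℝ} (h0 : 0 < lm) (hle : lm ≤ mu) :
    ‖x - J lm x‖ ≤ 2 * ‖x - J mu x‖ := by
  have hmu : 0 < mu := lt_of_lt_of_le h0 hle
  have h := hmono (J lm x) (J mu x) _ _ (resolvent_mem hJ h0 x) (resolvent_mem hJ hmu x)
  set u := x - J lm x with hu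
  set v := x - J mu x with hv
  have hpq : J lm x - J mu x = v - u := by rw [hu, hv]; abel
  rw [hpq] at h
  have f1 : (lm*mu) • (lm⁻¹ • u) = mu • u := by
    rw [smul_smul]; congr 1; field_simp
  have f2 : (lm*mu) • (mu⁻¹ • v) = lm • v := by
    rw [smul_smul]; congr 1; field_simp
  have e1 : (lm*mu) • (lm⁻¹ • u - mu⁻¹ • v) = mu • u - lm • v := by
    rw [smul_sub, f1, f2]
  have h3 : 0 ≤ ⟪v - u, mu • u - lm • v⟫ := by
    rw [← e1, real_inner_smul_right]
    exact mul_nonneg (by positivity) h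
  have hexp : ⟪v - u, mu • u - lm • v⟫
      = mu * ⟪u, v⟫ + lm * ⟪u, v⟫ - mu * ‖u‖^2 - lm * ‖v‖^2 := by
    simp [inner_sub_left, inner_sub_right, real_inner_smul_right,
      real_inner_self_eq_norm_sq, real_inner_comm v u]
    ring
  rw [hexp] at h3
  have hcs := real_inner_le_norm u v
  rcases eq_or_lt_of_le (norm_nonneg u) with hA | hA
  · rw [← hA]; positivity
  · nlinarith [norm_nonneg v, mul_le_mul_of_nonneg_left hcs (by linarith : (0:ℝ) ≤ mu + lm),
      mul_nonneg (mul_nonneg (sub_nonneg.mpr hle) (norm_nonneg u)) (norm_nonneg v),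
      mul_pos hmu hA, mul_nonneg h0.le (sq_nonneg ‖v‖)]

end Helpers

set_option maxHeartbeats 1600000 in
/-- Corollary 4.4: rates of asymptotic regularity for the mPPA iteration. -/
theorem mPPA_asymptotic_regularity_rates
    {H : Type*} [NormedAddCommGroup H] [InnerProductSpace ℝ H] [CompleteSpace H]
    (T : H → Set H) (hT : IsMaximalMonotoneOp T)
    (J : ℝ → H → H) (hJ : IsResolventFamilyOf J T)
    (s : H) (hsS : (0:H) ∈ T s)
    (u : H) (lam gam del cs : ℕ → ℝ) (e : ℕ → H) (z w : ℕ → H)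
    (hlam01 : ∀ n, lam n ∈ Set.Ioo (0:ℝ) 1)
    (hgam01 : ∀ n, gam n ∈ Set.Ioo (0:ℝ) 1)
    (hdel01 : ∀ n, del n ∈ Set.Ioo (0:ℝ) 1)
    (hsum1 : ∀ n, lam n + gam n + del n = 1)
    (hcs0 : ∀ n, 0 < cs n)
    (hmPPA : ∀ n, z (n+1) = lam n • u + gam n • z n + del n • J (cs n) (z n) + e n)
    (a c : ℕ) (ha : 0 < a) (hc : 0 < c)
    (ℓ E : ℕ → ℕ) (hℓ : Monotone ℓ) (hE : Monotone E)
    (Q1 : ∀ k n : ℕ, ℓ k ≤ n → lam n ≤ 1 / ((k:ℝ)+1))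
    (Q3 : ∀ m : ℕ, 1 / (a:ℝ) ≤ gam m ∧ gam m ≤ 1 - 1 / (a:ℝ))
    (Q4 : ∀ n, 1 / (c:ℝ) ≤ cs n)
    (Q6 : ∀ k n : ℕ, ∑ i ∈ Finset.Icc (E k + 1) (E k + n), ‖e i‖ ≤ 1 / ((k:ℝ)+1))
    (N₁ N₂ N₃ : ℕ)
    (hN₁ : ‖u‖ ≤ (N₁ : ℝ))
    (hN₂ : (∑ i ∈ Finset.range (E 0 + 1), ‖e i‖) + 1 ≤ (N₂ : ℝ))
    (hN₃u : ‖u - s‖ ≤ (N₃ : ℝ)) (hN₃z : ‖z 0 - s‖ ≤ (N₃ : ℝ))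
    (hw : ∀ n, z (n+1) = gam n • z n + (1 - gam n) • w n)
    (χ : ℕ → ℕ) (hχmono : Monotone χ)
    (hχ : ∀ k m : ℕ, χ k ≤ m → ‖w m - z m‖ ≤ 1 / ((k:ℝ)+1)) :
    ∀ k : ℕ,
      (∀ m : ℕ, χ k ≤ m → ‖z (m+1) - z m‖ ≤ 1 / ((k:ℝ)+1)) ∧
      (∀ m : ℕ, max (muFun ℓ E a (N₂+N₃) N₃ k) (χ (2*a*(k+1))) ≤ m →
        ‖J (cs m) (z m) - z m‖ ≤ 1 / ((k:ℝ)+1)) ∧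
      (∀ m : ℕ, max (muFun ℓ E a (N₂+N₃) N₃ (2*k+1)) (χ (4*a*(k+1))) ≤ m →
        ‖J (1 / (c:ℝ)) (z m) - z m‖ ≤ 1 / ((k:ℝ)+1)) := by
  have hmono := hT.1
  have ha0 : (0:ℝ) < a := by exact_mod_cast ha
  have hA1 : (1:ℝ) ≤ a := by exact_mod_cast ha
  -- N₂ ≥ 1
  have hN2R : (1:ℝ) ≤ (N₂:ℝ) := by
    have h0 : (0:ℝ) ≤ ∑ i ∈ Finset.range (E 0 + 1), ‖e i‖ :=
      Finset.sum_nonneg fun i _ => norm_nonneg _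
    linarith
  -- partial sums of errors are bounded by N₂
  have hesum : ∀ n, ∑ i ∈ Finset.range n, ‖e i‖ ≤ (N₂:ℝ) := by
    intro n
    rcases le_or_gt n (E 0 + 1) with hn | hn
    · calc ∑ i ∈ Finset.range n, ‖e i‖
          ≤ ∑ i ∈ Finset.range (E 0 + 1), ‖e i‖ :=
            Finset.sum_le_sum_of_subset_of_nonneg (Finset.range_subset_range.mpr hn)
              (fun i _ _ => norm_nonneg _)
        _ ≤ (N₂:ℝ) := by linarith
    · obtain ⟨t, rfl⟩ : ∃ t, n = (E 0 + 1) + t := ⟨n - (E 0 + 1), by omega⟩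
      rw [Finset.sum_range_add]
      have h1 : ∑ i ∈ Finset.range t, ‖e (E 0 + 1 + i)‖
          = ∑ i ∈ Finset.Icc (E 0 + 1) (E 0 + t), ‖e i‖ := by
        rw [← Finset.Ico_add_one_right_eq_Icc, Finset.sum_Ico_eq_sum_range,
          show E 0 + t + 1 - (E 0 + 1) = t by omega]
      have h2 := Q6 0 t
      rw [← h1] at h2
      norm_num at h2
      linarith
  -- errors are eventually small
  have he_small : ∀ K m : ℕ, E K + 1 ≤ m → ‖e m‖ ≤ 1 / ((K:ℝ)+1) := by
    intro K m hm
    have hm' : E K + (m - E K) = m := by omega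
    calc ‖e m‖ ≤ ∑ i ∈ Finset.Icc (E K + 1) (E K + (m - E K)), ‖e i‖ := by
          rw [hm']
          exact Finset.single_le_sum (fun i _ => norm_nonneg _)
            (Finset.mem_Icc.mpr ⟨hm, le_rfl⟩)
      _ ≤ 1 / ((K:ℝ)+1) := Q6 K _
  -- iterates stay bounded
  have hzS : ∀ n, ‖z n - s‖ ≤ (N₃:ℝ) + ∑ i ∈ Finset.range n, ‖e i‖ := by
    intro n
    induction n with
    | zero => simpa using hN₃z
    | succ n ih =>
      have hJn : ‖J (cs n) (z n) - s‖ ≤ ‖z n - s‖ :=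
        resolvent_nonexp hmono hJ hsS (hcs0 n) (z n)
      have hlamEq : lam n = 1 - gam n - del n := by linarith [hsum1 n]
      have hrw : z (n+1) - s
          = lam n • (u - s) + gam n • (z n - s) + del n • (J (cs n) (z n) - s) + e n := by
        rw [hmPPA n, hlamEq]; module
      have hl0 := (hlam01 n).1
      have hg0 := (hgam01 n).1
      have hd0 := (hdel01 n).1
      set S := ∑ i ∈ Finset.range n, ‖e i‖ with hS
      have hS0 : (0:ℝ) ≤ S := Finset.sum_nonneg fun i _ => norm_nonneg _
      have hb : ‖z (n+1) - s‖
          ≤ lam n * ‖u - s‖ + gam n * ‖z n - s‖ + del n * ‖J (cs n) (z n) - s‖ + ‖e n‖ := by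
        rw [hrw]
        calc ‖lam n • (u - s) + gam n • (z n - s) + del n • (J (cs n) (z n) - s) + e n‖
            ≤ ‖lam n • (u - s) + gam n • (z n - s) + del n • (J (cs n) (z n) - s)‖ + ‖e n‖ :=
              norm_add_le _ _
          _ ≤ ‖lam n • (u - s) + gam n • (z n - s)‖ + ‖del n • (J (cs n) (z n) - s)‖ + ‖e n‖ := by
              linarith [norm_add_le (lam n • (u - s) + gam n • (z n - s))
                (del n • (J (cs n) (z n) - s))]
          _ ≤ ‖lam n • (u - s)‖ + ‖gam n • (z n - s)‖ + ‖del n • (J (cs n) (z n) - s)‖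
              + ‖e n‖ := by
              linarith [norm_add_le (lam n • (u - s)) (gam n • (z n - s))]
          _ = lam n * ‖u - s‖ + gam n * ‖z n - s‖ + del n * ‖J (cs n) (z n) - s‖ + ‖e n‖ := by
              rw [norm_smul, norm_smul, norm_smul, Real.norm_eq_abs, Real.norm_eq_abs,
                Real.norm_eq_abs, abs_of_pos hl0, abs_of_pos hg0, abs_of_pos hd0]
      have b1 : lam n * ‖u - s‖ ≤ lam n * N₃ := by
        exact mul_le_mul_of_nonneg_left hN₃u hl0.le
      have b2 : gam n * ‖z n - s‖ ≤ gam n * ((N₃:ℝ) + S) :=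
        mul_le_mul_of_nonneg_left ih hg0.le
      have b3 : del n * ‖J (cs n) (z n) - s‖ ≤ del n * ((N₃:ℝ) + S) :=
        mul_le_mul_of_nonneg_left (hJn.trans ih) hd0.le
      have hEq : lam n * (N₃:ℝ) + gam n * ((N₃:ℝ) + S) + del n * ((N₃:ℝ) + S)
          = (N₃:ℝ) + S - lam n * S := by
        linear_combination ((N₃:ℝ) + S) * (hsum1 n)
      rw [Finset.sum_range_succ, ← hS]
      have hlS : 0 ≤ lam n * S := mul_nonneg hl0.le hS0
      linarith
  have hzbd : ∀ n, ‖z n - s‖ ≤ (N₂:ℝ) + (N₃:ℝ) := by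
    intro n
    have := hzS n
    have := hesum n
    linarith
  -- the distance from J (cs m) (z m) to u
  have hJu : ∀ m, ‖J (cs m) (z m) - u‖ ≤ (N₂:ℝ) + N₃ + N₃ := by
    intro m
    have h1 : ‖J (cs m) (z m) - s‖ ≤ ‖z m - s‖ :=
      resolvent_nonexp hmono hJ hsS (hcs0 m) (z m)
    have h2 : ‖J (cs m) (z m) - u‖ ≤ ‖J (cs m) (z m) - s‖ + ‖s - u‖ := by
      have : J (cs m) (z m) - u = (J (cs m) (z m) - s) + (s - u) := by abel
      rw [this]; exact norm_add_le _ _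
    have h3 : ‖s - u‖ = ‖u - s‖ := norm_sub_rev _ _
    have := hzbd m
    linarith
  -- Part (i), for arbitrary k
  have hi : ∀ k m : ℕ, χ k ≤ m → ‖z (m+1) - z m‖ ≤ 1 / ((k:ℝ)+1) := by
    intro k m hm
    have hg := hgam01 m
    have h1 : z (m+1) - z m = (1 - gam m) • (w m - z m) := by
      rw [hw m]; module
    rw [h1, norm_smul, Real.norm_eq_abs, abs_of_nonneg (by linarith [hg.2])]
    have h2 := hχ k m hm
    nlinarith [norm_nonneg (w m - z m), hg.1, hg.2]
  -- Part (ii), for arbitrary k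
  have hii : ∀ k m : ℕ, max (muFun ℓ E a (N₂+N₃) N₃ k) (χ (2*a*(k+1))) ≤ m →
      ‖J (cs m) (z m) - z m‖ ≤ 1 / ((k:ℝ)+1) := by
    intro k m hm
    simp only [muFun, max_le_iff] at hm
    obtain ⟨⟨hm1, hm2⟩, hm3⟩ := hm
    have hlam := Q1 (4*a*(k+1)*(N₂+N₃+N₃)) m hm1
    have hem := he_small (4*a*(k+1)) m hm2
    have hwz := hχ (2*a*(k+1)) m hm3
    push_cast at hlam hem hwz
    have hg := hgam01 m
    have hl := hlam01 m
    have hga := Q3 m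
    have h1g0 : 0 < 1 - gam m := by linarith [hg.2]
    have h1g : 1 / (a:ℝ) ≤ 1 - gam m := by linarith [hga.2]
    -- the key algebraic identity
    have heq : gam m • z m + (1 - gam m) • w m
        = lam m • u + gam m • z m + del m • J (cs m) (z m) + e m := by
      rw [← hw m, hmPPA m]
    have h2 : (1 - gam m) • w m = lam m • u + del m • J (cs m) (z m) + e m :=
      add_left_cancel (a := gam m • z m) (by rw [heq]; abel)
    have hgd : 1 - gam m = lam m + del m := by linarith [hsum1 m]
    have key : (1 - gam m) • (J (cs m) (z m) - w m)
        = lam m • (J (cs m) (z m) - u) - e m := by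
      rw [smul_sub, h2, hgd]; module
    have hnorm1 : (1 - gam m) * ‖J (cs m) (z m) - w m‖
        ≤ lam m * ‖J (cs m) (z m) - u‖ + ‖e m‖ := by
      calc (1 - gam m) * ‖J (cs m) (z m) - w m‖
          = ‖(1 - gam m) • (J (cs m) (z m) - w m)‖ := by
            rw [norm_smul, Real.norm_eq_abs, abs_of_pos h1g0]
        _ = ‖lam m • (J (cs m) (z m) - u) - e m‖ := by rw [key]
        _ ≤ ‖lam m • (J (cs m) (z m) - u)‖ + ‖e m‖ := norm_sub_le _ _
        _ = lam m * ‖J (cs m) (z m) - u‖ + ‖e m‖ := by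
            rw [norm_smul, Real.norm_eq_abs, abs_of_pos hl.1]
    have h3 : (1:ℝ) ≤ (a:ℝ) * (1 - gam m) := by
      rw [mul_comm]; exact (div_le_iff₀ ha0).mp h1g
    have hjw : ‖J (cs m) (z m) - w m‖
        ≤ (a:ℝ) * (lam m * ‖J (cs m) (z m) - u‖ + ‖e m‖) := by
      calc ‖J (cs m) (z m) - w m‖ = 1 * ‖J (cs m) (z m) - w m‖ := (one_mul _).symm
        _ ≤ ((a:ℝ) * (1 - gam m)) * ‖J (cs m) (z m) - w m‖ :=
            mul_le_mul_of_nonneg_right h3 (norm_nonneg _)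
        _ = (a:ℝ) * ((1 - gam m) * ‖J (cs m) (z m) - w m‖) := by ring
        _ ≤ (a:ℝ) * (lam m * ‖J (cs m) (z m) - u‖ + ‖e m‖) :=
            mul_le_mul_of_nonneg_left hnorm1 ha0.le
    have htri : ‖J (cs m) (z m) - z m‖ ≤ ‖J (cs m) (z m) - w m‖ + ‖w m - z m‖ := by
      have h4 : J (cs m) (z m) - z m = (J (cs m) (z m) - w m) + (w m - z m) := by abel
      rw [h4]; exact norm_add_le _ _
    -- numeric bookkeeping
    set A := (a:ℝ) with hA
    set K := (k:ℝ) with hK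
    set B := (N₂:ℝ) + N₃ + N₃ with hB
    have hK0 : (0:ℝ) ≤ K := by rw [hK]; positivity
    have hB1 : (1:ℝ) ≤ B := by
      have : (0:ℝ) ≤ (N₃:ℝ) := by positivity
      rw [hB]; linarith
    have hJub := hJu m
    have hlam0 : 0 ≤ lam m := hl.1.le
    have ht1 : A * (lam m * ‖J (cs m) (z m) - u‖) ≤ 1 / (4*(K+1)) := by
      have e1 : lam m * ‖J (cs m) (z m) - u‖ ≤ (1/(4*A*(K+1)*B+1)) * B := by
        apply mul_le_mul hlam hJub (norm_nonneg _)
        positivity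
      have e2 : A * ((1/(4*A*(K+1)*B+1)) * B) ≤ 1/(4*(K+1)) := by
        rw [show A * (1/(4*A*(K+1)*B+1) * B) = (A*B)/(4*A*(K+1)*B+1) by ring,
          div_le_div_iff₀ (by positivity) (by positivity)]
        nlinarith
      calc A * (lam m * ‖J (cs m) (z m) - u‖) ≤ A * ((1/(4*A*(K+1)*B+1)) * B) :=
            mul_le_mul_of_nonneg_left e1 (by positivity)
        _ ≤ 1/(4*(K+1)) := e2
    have ht2 : A * ‖e m‖ ≤ 1 / (4*(K+1)) := by
      have e2 : A * (1/(4*A*(K+1)+1)) ≤ 1/(4*(K+1)) := by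
        rw [mul_one_div, div_le_div_iff₀ (by positivity) (by positivity)]
        nlinarith
      calc A * ‖e m‖ ≤ A * (1/(4*A*(K+1)+1)) := mul_le_mul_of_nonneg_left hem (by positivity)
        _ ≤ 1/(4*(K+1)) := e2
    have ht3 : ‖w m - z m‖ ≤ 1 / (2*(K+1)) := by
      calc ‖w m - z m‖ ≤ 1/(2*A*(K+1)+1) := hwz
        _ ≤ 1/(2*(K+1)) := by
          apply one_div_le_one_div_of_le (by positivity)
          nlinarith
    have hfin : 1/(4*(K+1)) + 1/(4*(K+1)) + 1/(2*(K+1)) = 1/(K+1) := by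
      field_simp
      ring
    calc ‖J (cs m) (z m) - z m‖
        ≤ A * (lam m * ‖J (cs m) (z m) - u‖ + ‖e m‖) + ‖w m - z m‖ := by linarith
      _ = A * (lam m * ‖J (cs m) (z m) - u‖) + A * ‖e m‖ + ‖w m - z m‖ := by ring
      _ ≤ 1/(4*(K+1)) + 1/(4*(K+1)) + 1/(2*(K+1)) := by linarith
      _ = 1/(K+1) := hfin
  -- assemble
  intro k
  refine ⟨hi k, hii k, ?_⟩
  intro m hm
  have hidx : 2*a*(2*k+1+1) = 4*a*(k+1) := by ring
  have hm' : max (muFun ℓ E a (N₂+N₃) N₃ (2*k+1)) (χ (2*a*(2*k+1+1))) ≤ m := by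
    rw [hidx]; exact hm
  have h2 := hii (2*k+1) m hm'
  have hcmp : ‖z m - J (1/(c:ℝ)) (z m)‖ ≤ 2 * ‖z m - J (cs m) (z m)‖ :=
    resolvent_compare hmono hJ (z m) (by positivity) (Q4 m)
  rw [norm_sub_rev (z m)] at hcmp
  rw [norm_sub_rev (z m)] at hcmp
  have hcast : ((2*k+1:ℕ):ℝ) + 1 = 2*((k:ℝ)+1) := by push_cast; ring
  rw [hcast] at h2
  have hK0 : (0:ℝ) ≤ (k:ℝ) := by positivity
  calc ‖J (1/(c:ℝ)) (z m) - z m‖ ≤ 2 * ‖J (cs m) (z m) - z m‖ := hcmp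
    _ ≤ 2 * (1/(2*((k:ℝ)+1))) := by linarith
    _ = 1/((k:ℝ)+1) := by field_simp
end

section
/- Let (z_n) and (w_n) be sequences in a normed space X and N ∈ ℕ with ‖z_n‖, ‖w_n‖ ≤ N for all n ∈ ℕ. Let (α_n) ⊂ [0,1] and a ∈ ℕ \ {0} be such that 1/a ≤ α_n ≤ 1 − 1/a for all n ≥ a. Suppose z_{n+1} = α_n w_n + (1 − α_n) z_n for all n ∈ ℕ, and suppose there is a monotone function ν : ℕ → ℕ such that for all k ∈ ℕ and all n ≥ ν(k), ‖w_{n+1} − w_n‖ − ‖z_{n+1} − z_n‖ ≤ 1/(k+1). Then for every k ∈ ℕ and every monotone function f : ℕ → ℕ there is n ≤ χ̃(k,f) such that ‖w_m − z_m‖ ≤ 1/(k+1) for all m ∈ [n, n+f(n)]. Here χ̃(k,f) := φ(k,f) with parameters l := a, t := max{2Na(k+1), 1} and bound 2N, where φ(k,f) := θ(R−1, h(R−1), t, 2N, g), R := t(2t+1)a^t(k+1), g(m) := t + f(m), h(r) := max{a, a, ν(r)}, and θ(k', M, t, N', g) is defined by: P := N'(k'+1), n_i := M + i·t for i ∈ {0,…,P},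 r_P := 0, r_i := t + r_{i+1} + g(n_{i+1} + r_{i+1}) for i < P, and θ := M + (P−1)·t + r₀. -/
set_option maxHeartbeats 1000000


/-- `suzukiRho t g M P j` equals `r_{P-j}` where `r_P := 0` and
`r_i := t + r_{i+1} + g(n_{i+1} + r_{i+1})` with `n_i := M + i·t`.
In particular `r₀ = suzukiRho t g M P P`. -/
def suzukiRho (t : ℕ) (g : ℕ → ℕ) (M P : ℕ) : ℕ → ℕ
  | 0 => 0
  | j+1 => t + suzukiRho t g M P j + g (M + (P - j) * t + suzukiRho t g M P j)

/-- `θ(k', M, t, N', g) := M + (P−1)·t + r₀` where `P := N'(k'+1)`. -/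
def thetaFun (k M t N : ℕ) (g : ℕ → ℕ) : ℕ :=
  M + (N * (k+1) - 1) * t + suzukiRho t g M (N * (k+1)) (N * (k+1))

/-- `R := t(2t+1)aᵗ(k+1)`. -/
def Rsz (a k t : ℕ) : ℕ := t * (2*t+1) * a^t * (k+1)

/-- `χ̃(k,f) := θ(R−1, max{a,a,ν(R−1)}, t, 2N, g)` with `t := max{2Na(k+1), 1}`
and `g(m) := t + f(m)`. -/
def chiTilde (a : ℕ) (ν : ℕ → ℕ) (N k : ℕ) (f : ℕ → ℕ) : ℕ :=
  thetaFun (Rsz a k (max (2*N*a*(k+1)) 1) - 1)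
    (max a (max a (ν (Rsz a k (max (2*N*a*(k+1)) 1) - 1))))
    (max (2*N*a*(k+1)) 1) (2*N)
    (fun m => max (2*N*a*(k+1)) 1 + f m)


private def szC (a : ℕ) : ℕ → ℝ
  | 0 => 0
  | l+1 => (a:ℝ) * (szC a l + 1)

private lemma szC_nonneg (a l : ℕ) : 0 ≤ szC a l := by
  induction l with
  | zero => simp [szC]
  | succ l ih =>
      show 0 ≤ (a:ℝ) * (szC a l + 1)
      have : (0:ℝ) ≤ a := Nat.cast_nonneg a
      nlinarith

private lemma szC_le (a : ℕ) (ha : 2 ≤ a) : ∀ l, szC a l ≤ 2*(a:ℝ)^l - 2 := by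
  have hA : (2:ℝ) ≤ (a:ℝ) := by exact_mod_cast ha
  intro l
  induction l with
  | zero => simp [szC]
  | succ l ih =>
      show (a:ℝ) * (szC a l + 1) ≤ 2*(a:ℝ)^(l+1) - 2
      have hp : (1:ℝ) ≤ (a:ℝ)^l := one_le_pow₀ (by linarith)
      have : (a:ℝ) * (szC a l + 1) ≤ (a:ℝ) * (2*(a:ℝ)^l - 1) := by nlinarith
      calc (a:ℝ) * (szC a l + 1) ≤ (a:ℝ) * (2*(a:ℝ)^l - 1) := this
        _ = 2*(a:ℝ)^(l+1) - (a:ℝ) := by ring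
        _ ≤ 2*(a:ℝ)^(l+1) - 2 := by linarith

private lemma suzuki_core {X : Type*} [NormedAddCommGroup X] [NormedSpace ℝ X]
    (z w : ℕ → X) (N : ℕ)
    (hzN : ∀ n, ‖z n‖ ≤ (N : ℝ)) (hwN : ∀ n, ‖w n‖ ≤ (N : ℝ))
    (α : ℕ → ℝ) (hα : ∀ n, α n ∈ Set.Icc (0:ℝ) 1)
    (a : ℕ) (ha2 : 2 ≤ a)
    (haα : ∀ n : ℕ, a ≤ n → 1 / (a:ℝ) ≤ α n ∧ α n ≤ 1 - 1 / (a:ℝ))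
    (hrec : ∀ n, z (n+1) = α n • w n + (1 - α n) • z n)
    (k t R M : ℕ)
    (htk : 2*N*a*(k+1) ≤ t)
    (hRR : R = t*(2*t+1)*a^t*(k+1))
    (hMa : a ≤ M)
    (hd : ∀ n, M ≤ n → ‖w (n+1) - w n‖ - ‖z (n+1) - z n‖ ≤ 1/(R:ℝ))
    (hN1 : 1 ≤ N) :
    ∀ m, M + (2*N*R)*t ≤ m → ‖w m - z m‖ ≤ 1/((k:ℝ)+1) := by
  -- basic facts
  have hα0 : ∀ n, 0 ≤ α n := fun n => (Set.mem_Icc.mp (hα n)).1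
  have hα1 : ∀ n, α n ≤ 1 := fun n => (Set.mem_Icc.mp (hα n)).2
  have hA2 : (2:ℝ) ≤ (a:ℝ) := by exact_mod_cast ha2
  have hApos : (0:ℝ) < (a:ℝ) := by linarith
  have ht2 : 2 ≤ t := by
    have h1 : 4 ≤ 2*N*a*(k+1) := by
      calc 4 = 2*1*2*1 := by norm_num
        _ ≤ 2*N*a*(k+1) := Nat.mul_le_mul (Nat.mul_le_mul (Nat.mul_le_mul le_rfl hN1) ha2) (by omega)
    exact le_trans (by norm_num) (le_trans h1 htk)
  have hT2 : (2:ℝ) ≤ (t:ℝ) := by exact_mod_cast ht2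
  have hRpos : 0 < R := by
    rw [hRR]; positivity
  have hRr : (R:ℝ) = (t:ℝ)*(2*(t:ℝ)+1)*(a:ℝ)^t*((k:ℝ)+1) := by
    rw [hRR]; push_cast; ring
  have hRrpos : (0:ℝ) < (R:ℝ) := by exact_mod_cast hRpos
  have hkpos : (0:ℝ) < (k:ℝ)+1 := by positivity
  set s : ℕ → ℝ := fun n => ‖w n - z n‖ with hs
  set d : ℕ → ℝ := fun n => ‖w (n+1) - w n‖ - ‖z (n+1) - z n‖ with hdd
  have hs0 : ∀ n, 0 ≤ s n := fun n => norm_nonneg _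
  have hsN : ∀ q p : ℕ, ‖w q - z p‖ ≤ 2*(N:ℝ) := by
    intro q p
    calc ‖w q - z p‖ ≤ ‖w q‖ + ‖z p‖ := norm_sub_le _ _
      _ ≤ (N:ℝ) + (N:ℝ) := add_le_add (hwN q) (hzN p)
      _ = 2*(N:ℝ) := by ring
  have hsN' : ∀ n, s n ≤ 2*(N:ℝ) := fun n => hsN n n
  have L1 : ∀ n, ‖z (n+1) - z n‖ = α n * s n := by
    intro n
    have hid : z (n+1) - z n = α n • (w n - z n) := by rw [hrec n]; module
    rw [hid, norm_smul, Real.norm_eq_abs, abs_of_nonneg (hα0 n)]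
  have L2 : ∀ n, ‖w (n+1) - w n‖ = α n * s n + d n := by
    intro n
    have := L1 n
    simp only [hdd]
    linarith
  have L3 : ∀ n, s (n+1) ≤ s n + d n := by
    intro n
    have hwz : w n - z (n+1) = (1 - α n) • (w n - z n) := by rw [hrec n]; module
    have h1 : s (n+1) ≤ ‖w (n+1) - w n‖ + ‖w n - z (n+1)‖ := by
      simp only [hs]
      have := norm_sub_le_norm_sub_add_norm_sub (w (n+1)) (w n) (z (n+1))
      linarith
    have h2 : ‖w n - z (n+1)‖ = (1 - α n) * s n := by
      rw [hwz, norm_smul, Real.norm_eq_abs, abs_of_nonneg (by linarith [hα1 n])]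
    rw [h2, L2 n] at h1
    nlinarith [h1]
  -- rises bound
  have L6 : ∀ p j, p ≤ j → s j ≤ s p + ∑ l ∈ Finset.Ico p j, max (d l) 0 := by
    intro p j hpj
    induction j, hpj using Nat.le_induction with
    | base => simp
    | succ j hpj ih =>
        have := L3 j
        have hdm : d j ≤ max (d j) 0 := le_max_left _ _
        rw [Finset.sum_Ico_succ_top hpj]
        linarith
  -- key norm inequality (one step)
  have L7 : ∀ p q : ℕ, ‖w q - z (p+1)‖ - α p * ‖w q - w p‖ ≤ (1 - α p) * ‖w q - z p‖ := by
    intro p q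
    have hid : w q - z (p+1) = (1 - α p) • (w q - z p) + α p • (w q - w p) := by
      rw [hrec p]; module
    have : ‖w q - z (p+1)‖ ≤ (1 - α p) * ‖w q - z p‖ + α p * ‖w q - w p‖ := by
      rw [hid]
      calc ‖(1 - α p) • (w q - z p) + α p • (w q - w p)‖
          ≤ ‖(1 - α p) • (w q - z p)‖ + ‖α p • (w q - w p)‖ := norm_add_le _ _
        _ = (1 - α p) * ‖w q - z p‖ + α p * ‖w q - w p‖ := by
            rw [norm_smul, norm_smul, Real.norm_eq_abs, Real.norm_eq_abs,
              abs_of_nonneg (by linarith [hα1 p]), abs_of_nonneg (hα0 p)]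
    linarith
  -- chain sum bound for w
  have L8 : ∀ p l : ℕ, ‖w (p+l) - w p‖ ≤ ∑ j ∈ Finset.Ico p (p+l), (α j * s j + d j) := by
    intro p l
    have h := dist_le_Ico_sum_dist w (Nat.le_add_right p l)
    have heq : ∀ j ∈ Finset.Ico p (p+l), dist (w j) (w (j+1)) = α j * s j + d j := by
      intro j _
      rw [dist_eq_norm, ← L2 j, norm_sub_rev]
    rw [Finset.sum_congr rfl heq] at h
    calc ‖w (p+l) - w p‖ = dist (w p) (w (p+l)) := by rw [dist_eq_norm, norm_sub_rev]
      _ ≤ _ := h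
  -- main Ishikawa-type inequality
  have main : ∀ l p : ℕ, a ≤ p →
      (1 + ∑ j ∈ Finset.Ico p (p+l), α j) * s (p+l)
        - szC a l * (∑ j ∈ Finset.Ico p (p+l), (max (s j - s (p+l)) 0 + max (d j) 0))
      ≤ ‖w (p+l) - z p‖ := by
    intro l
    induction l with
    | zero =>
        intro p hp
        simp [szC, hs]
    | succ l ih =>
        intro p hp
        have hpe : (p+1)+l = p+(l+1) := by omega
        have hap : 1/(a:ℝ) ≤ α p ∧ α p ≤ 1 - 1/(a:ℝ) := haα p hp
        have h1ap : 1/(a:ℝ) ≤ 1 - α p := by linarith [hap.2]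
        have h1appos : 0 < 1 - α p := by
          have : (0:ℝ) < 1/(a:ℝ) := by positivity
          linarith
        have hIH := ih (p+1) (by omega)
        rw [hpe] at hIH
        -- abbreviations
        set e := p + (l+1) with he
        set se := s e with hse
        set S := ∑ j ∈ Finset.Ico p e, α j with hS
        set S' := ∑ j ∈ Finset.Ico (p+1) e, α j with hS'
        set U := ∑ j ∈ Finset.Ico p e, (max (s j - se) 0 + max (d j) 0) with hU
        set U' := ∑ j ∈ Finset.Ico (p+1) e, (max (s j - se) 0 + max (d j) 0) with hU'
        set Ue := ∑ j ∈ Finset.Ico p e, (α j * (s j - se) + d j) with hUe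
        have hF8 : S = α p + S' := by
          rw [hS, hS', Finset.sum_eq_sum_Ico_succ_bot (by omega : p < e)]
        have hF1 := L7 p e
        have hF3 : ‖w e - w p‖ ≤ S * se + Ue := by
          have h8 := L8 p (l+1)
          rw [← he] at h8
          have : ∑ j ∈ Finset.Ico p e, (α j * s j + d j) = S * se + Ue := by
            rw [hS, hUe, Finset.sum_mul, ← Finset.sum_add_distrib]
            apply Finset.sum_congr rfl
            intro j _
            ring
          linarith [h8, this.le, this.ge]
        have hF4 : Ue ≤ U := by
          apply Finset.sum_le_sum
          intro j _
          have h1 : α j * (s j - se) ≤ max (s j - se) 0 := by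
            rcases le_total (s j - se) 0 with h | h
            · have : α j * (s j - se) ≤ 0 := mul_nonpos_of_nonneg_of_nonpos (hα0 j) h
              exact this.trans (le_max_right _ _)
            · calc α j * (s j - se) ≤ 1 * (s j - se) := by
                    apply mul_le_mul_of_nonneg_right (hα1 j) h
                _ = s j - se := by ring
                _ ≤ max (s j - se) 0 := le_max_left _ _
          have h2 : d j ≤ max (d j) 0 := le_max_left _ _
          linarith
        have hF5 : U' ≤ U := by
          apply Finset.sum_le_sum_of_subset_of_nonneg
          · exact Finset.Ico_subset_Ico (Nat.le_succ p) le_rfl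
          · intro j _ _
            positivity
        have hF6 : 0 ≤ U := by
          rw [hU]; apply Finset.sum_nonneg; intro j _; positivity
        have hC0 : 0 ≤ szC a l := szC_nonneg a l
        have hszCsucc : szC a (l+1) = (a:ℝ) * (szC a l + 1) := rfl
        -- the arithmetic
        have hq1 : α p * ‖w e - w p‖ ≤ α p * (S * se + Ue) :=
          mul_le_mul_of_nonneg_left hF3 (hα0 p)
        have hq2 : α p * Ue ≤ U := by
          have h1 : α p * Ue ≤ α p * U := mul_le_mul_of_nonneg_left hF4 (hα0 p)
          have h2 : α p * U ≤ 1 * U := mul_le_mul_of_nonneg_right (hα1 p) hF6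
          linarith
        have hq3 : szC a l * U' ≤ szC a l * U := mul_le_mul_of_nonneg_left hF5 hC0
        have hring : (1+S)*((1-α p)*se) = (1+S')*se - α p*(S*se) := by
          rw [hF8]; ring
        have h2 : (1+S)*((1-α p)*se) - (szC a l + 1)*U ≤ (1-α p)*‖w e - z p‖ := by
          have expand : α p * (S * se + Ue) = α p * (S*se) + α p * Ue := by ring
          nlinarith [hIH, hF1, hq1, hq2, hq3]
        have h3 : (1-α p) * (szC a (l+1) * U) ≥ (szC a l + 1) * U := by
          rw [hszCsucc]
          have hA1 : 1 ≤ (1 - α p) * (a:ℝ) := by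
            have := mul_le_mul_of_nonneg_right h1ap (le_of_lt hApos)
            rw [one_div, inv_mul_cancel₀ (ne_of_gt hApos)] at this
            linarith
          nlinarith [mul_nonneg (by linarith : (0:ℝ) ≤ szC a l + 1) hF6]
        have h4 : (1-α p) * ((1+S)*se - szC a (l+1) * U) ≤ (1-α p) * ‖w e - z p‖ := by
          have expand : (1-α p) * ((1+S)*se - szC a (l+1) * U)
              = (1+S)*((1-α p)*se) - (1-α p) * (szC a (l+1) * U) := by ring
          rw [expand]
          linarith

        exact le_of_mul_le_mul_left (by linarith [h4]) h1appos
  -- key dichotomy lemma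
  have keyL : ∀ p, M ≤ p → 1/((k:ℝ)+1) < s (p+t) → s (p+t) + 1/(R:ℝ) ≤ s p := by
    intro p hp hsp
    by_contra hcon
    push_neg at hcon
    have hpa : a ≤ p := le_trans hMa hp
    have hmain := main t p hpa
    have hdb : ∀ l, M ≤ l → max (d l) 0 ≤ 1/(R:ℝ) := by
      intro l hl
      exact max_le (hd l hl) (by positivity)
    -- lower bound on sum of α
    have hSlb : 2*(N:ℝ)*((k:ℝ)+1) ≤ ∑ j ∈ Finset.Ico p (p+t), α j := by
      have hmem : ∀ j ∈ Finset.Ico p (p+t), 1/(a:ℝ) ≤ α j := by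
        intro j hj
        exact (haα j (le_trans hpa (Finset.mem_Ico.mp hj).1)).1
      have hcard : (Finset.Ico p (p+t)).card = t := by rw [Nat.card_Ico]; omega
      have h := Finset.sum_le_sum hmem
      rw [Finset.sum_const, hcard, nsmul_eq_mul] at h
      have htcast : 2*(N:ℝ)*(a:ℝ)*((k:ℝ)+1) ≤ (t:ℝ) := by exact_mod_cast htk
      have : 2*(N:ℝ)*((k:ℝ)+1) ≤ (t:ℝ)*(1/(a:ℝ)) := by
        rw [mul_one_div, le_div_iff₀ hApos]
        linarith
      linarith
    -- upper bound on the correction sum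
    have hUb : (∑ j ∈ Finset.Ico p (p+t), (max (s j - s (p+t)) 0 + max (d j) 0))
        ≤ ((t:ℝ)*((t:ℝ)+3)/2) / (R:ℝ) := by
      have hterm : ∀ j ∈ Finset.Ico p (p+t),
          max (s j - s (p+t)) 0 + max (d j) 0 ≤ (((j-p:ℕ)):ℝ)/(R:ℝ) + 2/(R:ℝ) := by
        intro j hj
        obtain ⟨hj1, hj2⟩ := Finset.mem_Ico.mp hj
        have h6 := L6 p j hj1
        have hsum : ∑ l ∈ Finset.Ico p j, max (d l) 0 ≤ ((j-p:ℕ):ℝ)/(R:ℝ) := by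
          have hcard : (Finset.Ico p j).card = j - p := Nat.card_Ico p j
          have h := Finset.sum_le_card_nsmul (Finset.Ico p j) (fun l => max (d l) 0)
            (1/(R:ℝ)) (fun l hl => hdb l (le_trans hp (Finset.mem_Ico.mp hl).1))
          rw [hcard, nsmul_eq_mul] at h
          rw [div_eq_mul_one_div]
          exact h
        have h1 : max (s j - s (p+t)) 0 ≤ ((j-p:ℕ):ℝ)/(R:ℝ) + 1/(R:ℝ) := by
          apply max_le
          · have hdrop : s p - s (p+t) < 1/(R:ℝ) := by linarith
            linarith
          · positivity
        have h2 : max (d j) 0 ≤ 1/(R:ℝ) := hdb j (le_trans hp hj1)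
        have : ((j-p:ℕ):ℝ)/(R:ℝ) + 1/(R:ℝ) + 1/(R:ℝ) = ((j-p:ℕ):ℝ)/(R:ℝ) + 2/(R:ℝ) := by ring
        linarith
      have h := Finset.sum_le_sum hterm
      have hsum2 : (∑ j ∈ Finset.Ico p (p+t), ((((j-p:ℕ)):ℝ)/(R:ℝ) + 2/(R:ℝ)))
          = ((t:ℝ)*((t:ℝ)+3)/2) / (R:ℝ) := by
        rw [Finset.sum_Ico_eq_sum_range]
        have hrw : ∀ i ∈ Finset.range (p + t - p), (((p+i-p:ℕ)):ℝ)/(R:ℝ) + 2/(R:ℝ)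
            = ((i:ℕ):ℝ)/(R:ℝ) + 2/(R:ℝ) := by
          intro i _
          have hip : p + i - p = i := by omega
          rw [hip]
        rw [Finset.sum_congr rfl hrw]
        have hpt : p + t - p = t := by omega
        rw [hpt, Finset.sum_add_distrib, Finset.sum_const, Finset.card_range, nsmul_eq_mul]
        have hgauss : (∑ i ∈ Finset.range t, ((i:ℕ):ℝ)) = (t:ℝ)*((t:ℝ)-1)/2 := by
          have hg : ∀ n : ℕ, (∑ i ∈ Finset.range n, ((i:ℕ):ℝ)) = (n:ℝ)*((n:ℝ)-1)/2 := by
            intro n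
            induction n with
            | zero => simp
            | succ n ih =>
                rw [Finset.sum_range_succ, ih]
                push_cast
                ring
          exact hg t
        rw [← Finset.sum_div, hgauss]
        ring
      rw [hsum2] at h
      exact h
    -- correction is at most 1/(k+1)
    set U := ∑ j ∈ Finset.Ico p (p+t), (max (s j - s (p+t)) 0 + max (d j) 0) with hUdef
    have hU0 : 0 ≤ U := by
      rw [hUdef]; apply Finset.sum_nonneg; intro j _; positivity
    have hcorr : szC a t * U ≤ 1/((k:ℝ)+1) := by
      have hszle : szC a t ≤ 2*(a:ℝ)^t := by
        have := szC_le a ha2 t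
        linarith
      have h1 : szC a t * U ≤ (2*(a:ℝ)^t) * (((t:ℝ)*((t:ℝ)+3)/2)/(R:ℝ)) := by
        apply mul_le_mul hszle hUb hU0 (by positivity)
      have h2 : (2*(a:ℝ)^t) * (((t:ℝ)*((t:ℝ)+3)/2)/(R:ℝ)) ≤ 1/((k:ℝ)+1) := by
        have hpow : (0:ℝ) < (a:ℝ)^t := pow_pos hApos t
        have hX : (0:ℝ) < (t:ℝ)*(2*(t:ℝ)+1)*(a:ℝ)^t*((k:ℝ)+1) := by positivity
        have hfac : (0:ℝ) ≤ ((t:ℝ)*((t:ℝ)-2)) * ((a:ℝ)^t*((k:ℝ)+1)) :=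
          mul_nonneg (mul_nonneg (by linarith) (by linarith)) (by positivity)
        calc (2*(a:ℝ)^t) * (((t:ℝ)*((t:ℝ)+3)/2)/(R:ℝ))
            = ((a:ℝ)^t*((t:ℝ)*((t:ℝ)+3))) / ((t:ℝ)*(2*(t:ℝ)+1)*(a:ℝ)^t*((k:ℝ)+1)) := by
              rw [hRr]; ring
          _ ≤ 1/((k:ℝ)+1) := by
              rw [div_le_div_iff₀ hX hkpos]
              nlinarith [hfac]
      linarith
    -- conclude s (p+t) ≤ 1/(k+1), contradiction
    have hwb := hsN (p+t) p
    have e1 : (1+2*(N:ℝ)*((k:ℝ)+1)) * s (p+t)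
        ≤ (1 + ∑ j ∈ Finset.Ico p (p+t), α j) * s (p+t) :=
      mul_le_mul_of_nonneg_right (by linarith) (hs0 _)
    have e2 : (1+2*(N:ℝ)*((k:ℝ)+1)) * s (p+t) ≤ 2*(N:ℝ) + 1/((k:ℝ)+1) := by
      linarith
    have hke : ((k:ℝ)+1) * (1/((k:ℝ)+1)) = 1 := by field_simp
    have hNpos : (1:ℝ) ≤ (N:ℝ) := by exact_mod_cast hN1
    have e3 : (1+2*(N:ℝ)*((k:ℝ)+1)) * (1/((k:ℝ)+1)) < (1+2*(N:ℝ)*((k:ℝ)+1)) * s (p+t) := by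
      apply mul_lt_mul_of_pos_left hsp
      nlinarith
    have e4 : (1+2*(N:ℝ)*((k:ℝ)+1)) * (1/((k:ℝ)+1)) = 1/((k:ℝ)+1) + 2*(N:ℝ) := by
      have : 2*(N:ℝ)*((k:ℝ)+1) * (1/((k:ℝ)+1)) = 2*(N:ℝ) := by
        field_simp
      nlinarith [this]
    linarith
  -- iterated chain lemma
  have chain : ∀ j p, M ≤ p → 1/((k:ℝ)+1) < s (p + j*t) →
      s (p + j*t) + (j:ℝ)*(1/(R:ℝ)) ≤ s p := by
    intro j
    induction j with
    | zero => intro p hp h; simp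
    | succ j ih =>
        intro p hp h
        have hrw : p + (j+1)*t = (p + j*t) + t := by ring
        rw [hrw] at h
        have hMp : M ≤ p + j*t := le_trans hp (Nat.le_add_right _ _)
        have hkey := keyL (p + j*t) hMp h
        have hR0 : (0:ℝ) < 1/(R:ℝ) := by positivity
        have h2 : 1/((k:ℝ)+1) < s (p + j*t) := by linarith
        have hih := ih p hp h2
        rw [hrw]
        push_cast
        linarith
  -- conclusion
  intro m hm
  by_contra hno
  push_neg at hno
  have hm' : m = (M + (m - (M + 2*N*R*t))) + (2*N*R)*t := by omega
  rw [hm'] at hno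
  have hno' : 1/((k:ℝ)+1) < s ((M + (m - (M + 2*N*R*t))) + (2*N*R)*t) := hno
  have hch := chain (2*N*R) (M + (m - (M + 2*N*R*t))) (Nat.le_add_right _ _) hno'
  have hPr : ((2*N*R:ℕ):ℝ)*(1/(R:ℝ)) = 2*(N:ℝ) := by
    push_cast
    field_simp
  have heps : (0:ℝ) < 1/((k:ℝ)+1) := by positivity
  have hb1 := hsN' (M + (m - (M + 2*N*R*t)))
  have hb2 := hs0 ((M + (m - (M + 2*N*R*t))) + (2*N*R)*t)
  rw [hPr] at hch
  linarith


/-- Lemma 4.7: quantitative version of Suzuki's second lemma. -/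
theorem quantitative_suzuki_two
    {X : Type*} [NormedAddCommGroup X] [NormedSpace ℝ X]
    (z w : ℕ → X) (N : ℕ)
    (hzN : ∀ n, ‖z n‖ ≤ (N : ℝ)) (hwN : ∀ n, ‖w n‖ ≤ (N : ℝ))
    (α : ℕ → ℝ) (hα : ∀ n, α n ∈ Set.Icc (0:ℝ) 1)
    (a : ℕ) (ha : 0 < a)
    (haα : ∀ n : ℕ, a ≤ n → 1 / (a:ℝ) ≤ α n ∧ α n ≤ 1 - 1 / (a:ℝ))
    (hrec : ∀ n, z (n+1) = α n • w n + (1 - α n) • z n)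
    (ν : ℕ → ℕ) (hν : Monotone ν)
    (hνprop : ∀ k n : ℕ, ν k ≤ n →
      ‖w (n+1) - w n‖ - ‖z (n+1) - z n‖ ≤ 1 / ((k:ℝ)+1)) :
    ∀ k : ℕ, ∀ f : ℕ → ℕ, Monotone f → ∃ n ≤ chiTilde a ν N k f,
      ∀ m : ℕ, n ≤ m → m ≤ n + f n → ‖w m - z m‖ ≤ 1 / ((k:ℝ)+1) := by
  intro k f hf
  by_cases hN0 : N = 0
  · refine ⟨0, Nat.zero_le _, ?_⟩
    intro m _ _
    have hz : ‖z m‖ ≤ 0 := by simpa [hN0] using hzN m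
    have hw : ‖w m‖ ≤ 0 := by simpa [hN0] using hwN m
    have hz0 : z m = 0 := norm_le_zero_iff.mp hz
    have hw0 : w m = 0 := norm_le_zero_iff.mp hw
    have hpos : (0:ℝ) ≤ 1/((k:ℝ)+1) := by positivity
    simpa [hz0, hw0] using hpos
  have hN1 : 1 ≤ N := Nat.one_le_iff_ne_zero.mpr hN0
  by_cases ha1 : a = 1
  · exfalso
    have h := haα a le_rfl
    rw [ha1] at h
    norm_num at h
    linarith [h.1, h.2]
  have ha2 : 2 ≤ a := by omega
  set t := max (2*N*a*(k+1)) 1 with htdef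
  set R := Rsz a k t with hRdef
  set k' := R - 1 with hk'def
  set M := max a (max a (ν k')) with hMdef
  have htk : 2*N*a*(k+1) ≤ t := le_max_left _ _
  have ht1 : 1 ≤ t := le_max_right _ _
  have hRR : R = t*(2*t+1)*a^t*(k+1) := by rw [hRdef]; rfl
  have hMa : a ≤ M := le_max_left _ _
  have hRpos : 0 < R := by
    rw [hRR]
    exact Nat.mul_pos (Nat.mul_pos (Nat.mul_pos (by omega) (by omega))
      (pow_pos (by omega : 0 < a) t)) (by omega)
  have hkR : k' + 1 = R := by omega
  have hd : ∀ n, M ≤ n → ‖w (n+1) - w n‖ - ‖z (n+1) - z n‖ ≤ 1/(R:ℝ) := by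
    intro n hn
    have hvn : ν k' ≤ n :=
      le_trans (le_trans (le_max_right a (ν k')) (le_max_right a (max a (ν k')))) hn
    have h := hνprop k' n hvn
    have hcast : ((k':ℕ):ℝ) + 1 = (R:ℝ) := by exact_mod_cast hkR
    rw [← hcast]
    exact h
  have hcore := suzuki_core z w N hzN hwN α hα a ha2 haα hrec k t R M htk hRR hMa hd hN1
  refine ⟨M + (2*N*R)*t, ?_, ?_⟩
  · have hchi : chiTilde a ν N k f
        = M + (2*N*R - 1)*t + suzukiRho t (fun m => t + f m) M (2*N*R) (2*N*R) := by
      unfold chiTilde thetaFun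
      rw [← htdef, ← hRdef, ← hk'def, ← hMdef, hkR]
    rw [hchi]
    have hP1 : 0 < 2*N*R := Nat.mul_pos (by omega) hRpos
    have hrho : t ≤ suzukiRho t (fun m => t + f m) M (2*N*R) (2*N*R) := by
      obtain ⟨Q, hQ⟩ : ∃ Q, 2*N*R = Q + 1 := ⟨2*N*R - 1, by omega⟩
      rw [hQ]
      exact le_trans (Nat.le_add_right t _) (Nat.le_add_right _ _)
    have hmul : (2*N*R)*t = (2*N*R - 1)*t + t := by
      have h1 : (2*N*R - 1) + 1 = 2*N*R := by omega
      calc (2*N*R)*t = ((2*N*R - 1) + 1)*t := by rw [h1]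
        _ = (2*N*R - 1)*t + t := by rw [Nat.succ_mul]
    omega
  · intro m hm _
    exact hcore m hm
end
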